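/- For density matrices ρ₊ ⊥ ρ₋ with Δ := ε(ρ₊ − ρ₋) for ε ∈ (0,1), one has λ^↓(Δ) + λ^↑(ρ₋) = λ(ε ρ₊ + (1−ε) ρ₋) up to reordering, and hence H(λ^↓(Δ) + λ^↑(ρ₋)) = S(ρ₋ + Δ). -/

import Mathlib

open Matrix BigOperators
open scoped ComplexOrder

noncomputable section

/-- `η(x) = -x log x` (with `log 0 = 0` convention). -/
def eta (x : ℝ) : ℝ := -(x * Real.log x)

/-- Shannon entropy of a (non-negative) vector. -/
def shannonH {n : ℕ} (p : Fin n → ℝ) : ℝ := ∑ i, eta (p i)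

/-- Binary entropy `h(ε) = -ε log ε - (1-ε) log(1-ε)`. -/
def binEnt (x : ℝ) : ℝ := -(x * Real.log x) - ((1 - x) * Real.log (1 - x))

/-- Eigenvalues of a Hermitian matrix in non-decreasing order. -/
def eigUp {d : ℕ} (A : Matrix (Fin d) (Fin d) ℂ) (hA : A.IsHermitian) : Fin d → ℝ :=
  hA.eigenvalues ∘ Tuple.sort hA.eigenvalues

/-- Eigenvalues of a Hermitian matrix in non-increasing order. -/
def eigDown {d : ℕ} (A : Matrix (Fin d) (Fin d) ℂ) (hA : A.IsHermitian) : Fin d → ℝ :=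
  fun i => eigUp A hA i.rev

/-- Entries of a vector rearranged in non-increasing order. -/
def sortDown {n : ℕ} (x : Fin n → ℝ) : Fin n → ℝ :=
  fun i => (x ∘ Tuple.sort x) i.rev

/-- `Majorizes y x` : the vector `x` is majorized by the vector `y`. -/
def Majorizes {n : ℕ} (y x : Fin n → ℝ) : Prop :=
  (∀ k : ℕ, ∑ j ∈ Finset.univ.filter (fun j : Fin n => (j : ℕ) < k), sortDown x j ≤
            ∑ j ∈ Finset.univ.filter (fun j : Fin n => (j : ℕ) < k), sortDown y j) ∧
  ∑ j, x j = ∑ j, y j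

/-- Von Neumann entropy `S(A) = -Tr(A log A)` expressed via eigenvalues. -/
def vnEntropy {n : Type*} [Fintype n] [DecidableEq n] (A : Matrix n n ℂ) : ℝ :=
  if hA : A.IsHermitian then ∑ i, eta (hA.eigenvalues i) else 0

/-- Trace norm of a Hermitian matrix: sum of absolute values of eigenvalues. -/
def traceNorm {n : Type*} [Fintype n] [DecidableEq n] (A : Matrix n n ℂ) : ℝ :=
  if hA : A.IsHermitian then ∑ i, |hA.eigenvalues i| else 0

/-- A density matrix: positive semi-definite with unit trace. -/
def IsDensity {n : Type*} [Fintype n] [DecidableEq n] (ρ : Matrix n n ℂ) : Prop :=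
  ρ.PosSemidef ∧ ρ.trace = 1

/-- Matrix logarithm via the spectral decomposition (with `log 0 = 0` convention). -/
def mlog {n : Type*} [Fintype n] [DecidableEq n] (A : Matrix n n ℂ) : Matrix n n ℂ :=
  if hA : A.IsHermitian then
    (hA.eigenvectorUnitary : Matrix n n ℂ)
      * Matrix.diagonal (fun i => (Real.log (hA.eigenvalues i) : ℂ))
      * (star (hA.eigenvectorUnitary : Matrix n n ℂ))
  else 0

/-- Umegaki relative entropy `D(ρ‖σ) = Tr(ρ (log ρ - log σ))`. -/
def relEnt {n : Type*} [Fintype n] [DecidableEq n] (ρ σ : Matrix n n ℂ) : ℝ :=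
  ((ρ * (mlog ρ - mlog σ)).trace).re

/-- Max-relative entropy `D_max(ρ‖σ) = inf {λ > 0 : ρ ≤ e^λ σ}`. -/
def dMax {n : Type*} [Fintype n] [DecidableEq n] (ρ σ : Matrix n n ℂ) : ℝ :=
  sInf {l : ℝ | 0 < l ∧ (Real.exp l • σ - ρ).PosSemidef}

/-- Partial trace over the first tensor factor. -/
def ptraceA {dA dB : ℕ} (ρ : Matrix (Fin dA × Fin dB) (Fin dA × Fin dB) ℂ) :
    Matrix (Fin dB) (Fin dB) ℂ :=
  Matrix.of fun i j => ∑ a, ρ (a, i) (a, j)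

/-- Conditional entropy `S(A|B)_ρ = S(ρ_{AB}) - S(ρ_B)`. -/
def condEnt {dA dB : ℕ} (ρ : Matrix (Fin dA × Fin dB) (Fin dA × Fin dB) ℂ) : ℝ :=
  vnEntropy ρ - vnEntropy (ptraceA ρ)


section Aux
open Polynomial


/-- conjugation by a unitary: product collapses. -/
lemma conj_mul_conj {d : ℕ} (V : Matrix (Fin d) (Fin d) ℂ) (hV : star V * V = 1)
    (D E : Matrix (Fin d) (Fin d) ℂ) :
    (V * D * star V) * (V * E * star V) = V * (D * E) * star V := by
  simp only [Matrix.mul_assoc]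
  rw [← Matrix.mul_assoc (star V) V, hV, Matrix.one_mul]

lemma charpoly_unitary_conj {d : ℕ} (V : Matrix (Fin d) (Fin d) ℂ)
    (hV : star V * V = 1) (hV' : V * star V = 1) (c : Fin d → ℂ) :
    (V * Matrix.diagonal c * star V).charpoly = ∏ i, (X - C (c i)) := by
  have key : (V * Matrix.diagonal c * star V).charpoly = (Matrix.diagonal c).charpoly := by
    unfold Matrix.charpoly
    have hφ : ∀ A B : Matrix (Fin d) (Fin d) ℂ,
        (C : ℂ →+* ℂ[X]).mapMatrix (A * B) =
          (C : ℂ →+* ℂ[X]).mapMatrix A * (C : ℂ →+* ℂ[X]).mapMatrix B :=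
      fun A B => map_mul _ A B
    have hcm : charmatrix (V * Matrix.diagonal c * star V) =
        (C : ℂ →+* ℂ[X]).mapMatrix V * charmatrix (Matrix.diagonal c)
          * (C : ℂ →+* ℂ[X]).mapMatrix (star V) := by
      unfold charmatrix
      rw [Matrix.mul_sub, Matrix.sub_mul, hφ, hφ]
      congr 1
      have h1 : (C : ℂ →+* ℂ[X]).mapMatrix V * Matrix.scalar (Fin d) (X : ℂ[X])
          * (C : ℂ →+* ℂ[X]).mapMatrix (star V)
          = Matrix.scalar (Fin d) (X : ℂ[X])
            * ((C : ℂ →+* ℂ[X]).mapMatrix V * (C : ℂ →+* ℂ[X]).mapMatrix (star V)) := by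
        rw [Matrix.mul_assoc, Matrix.scalar_commute (X : ℂ[X]) (Commute.all _) _,
          ← Matrix.mul_assoc]
        exact (Matrix.scalar_commute (X : ℂ[X]) (Commute.all _) _).symm
      rw [h1, ← hφ, hV', _root_.map_one, Matrix.mul_one]
    rw [hcm, Matrix.det_mul, Matrix.det_mul, mul_comm, ← mul_assoc, ← Matrix.det_mul, ← hφ, hV,
      _root_.map_one, Matrix.det_one, one_mul]
  rw [key, Matrix.charpoly_of_upperTriangular _ (Matrix.blockTriangular_diagonal c)]
  simp

/-- eigenvalue multiset of a Hermitian matrix given a unitary diagonalization. -/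
lemma eig_multiset {d : ℕ} (A : Matrix (Fin d) (Fin d) ℂ) (hA : A.IsHermitian)
    (V : Matrix (Fin d) (Fin d) ℂ) (hV : star V * V = 1) (hV' : V * star V = 1)
    (c : Fin d → ℝ) (hAc : A = V * Matrix.diagonal (fun i => ((c i : ℂ))) * star V) :
    Finset.univ.val.map c = Finset.univ.val.map hA.eigenvalues := by
  have hU : star (hA.eigenvectorUnitary : Matrix (Fin d) (Fin d) ℂ)
      * (hA.eigenvectorUnitary : Matrix (Fin d) (Fin d) ℂ) = 1 :=
    (Unitary.mem_iff.mp hA.eigenvectorUnitary.2).1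
  have hU' : (hA.eigenvectorUnitary : Matrix (Fin d) (Fin d) ℂ)
      * star (hA.eigenvectorUnitary : Matrix (Fin d) (Fin d) ℂ) = 1 :=
    (Unitary.mem_iff.mp hA.eigenvectorUnitary.2).2
  have h1 : (∏ i, (X - C ((c i : ℂ)))) = ∏ i, (X - C ((hA.eigenvalues i : ℂ))) := by
    rw [← charpoly_unitary_conj V hV hV' _, ← hAc,
      ← charpoly_unitary_conj _ hU hU' (fun i => ((hA.eigenvalues i : ℂ)))]
    congr 1
    convert hA.spectral_theorem using 3
    rfl
  have h2 : (Finset.univ.val.map fun i => ((c i : ℂ)))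
      = Finset.univ.val.map fun i => ((hA.eigenvalues i : ℂ)) := by
    have r1 := Polynomial.roots_multiset_prod_X_sub_C
      (Finset.univ.val.map fun i => ((c i : ℂ)))
    have r2 := Polynomial.roots_multiset_prod_X_sub_C
      (Finset.univ.val.map fun i => ((hA.eigenvalues i : ℂ)))
    rw [← r1, ← r2]
    congr 1
    rw [Multiset.map_map, Multiset.map_map]
    calc (Finset.univ.val.map fun i => X - C ((c i : ℂ))).prod
        = ∏ i, (X - C ((c i : ℂ))) := rfl
      _ = ∏ i, (X - C ((hA.eigenvalues i : ℂ))) := h1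
      _ = (Finset.univ.val.map fun i => X - C ((hA.eigenvalues i : ℂ))).prod := rfl
  have := Multiset.map_injective (f := (Complex.ofReal : ℝ → ℂ)) Complex.ofReal_injective
  apply this
  rw [Multiset.map_map, Multiset.map_map]
  exact h2

lemma mono_unique {n : ℕ} {u w : Fin n → ℝ} (hu : Monotone u) (hw : Monotone w)
    (h : Finset.univ.val.map u = Finset.univ.val.map w) : u = w := by
  apply List.ofFn_injective
  rw [Fin.univ_val_map, Fin.univ_val_map] at h
  exact List.Perm.eq_of_sortedLE hu.sortedLE_ofFn hw.sortedLE_ofFn (Multiset.coe_eq_coe.mp h)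

lemma map_comp_perm {n : ℕ} (u : Fin n → ℝ) (σ : Equiv.Perm (Fin n)) :
    Finset.univ.val.map (u ∘ σ) = Finset.univ.val.map u := by
  have h : Finset.univ.val.map (⇑σ) = Finset.univ.val := by
    have := congrArg Finset.val (Finset.map_univ_equiv σ)
    simpa [Finset.map_val] using this
  calc Finset.univ.val.map (u ∘ σ) = (Finset.univ.val.map (⇑σ)).map u := by
        rw [Multiset.map_map]
    _ = Finset.univ.val.map u := by rw [h]

lemma exists_perm_of_map_eq {n : ℕ} {u w : Fin n → ℝ}
    (h : Finset.univ.val.map u = Finset.univ.val.map w) :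
    ∃ e : Equiv.Perm (Fin n), ∀ i, u i = w (e i) := by
  have hs : u ∘ Tuple.sort u = w ∘ Tuple.sort w := by
    apply mono_unique (Tuple.monotone_sort u) (Tuple.monotone_sort w)
    rw [map_comp_perm, map_comp_perm, h]
  refine ⟨(Tuple.sort u).symm.trans (Tuple.sort w), fun i => ?_⟩
  have := congrFun hs ((Tuple.sort u).symm i)
  simpa using this


lemma conj_smul {d : ℕ} (r : ℝ) (f : Fin d → ℝ) (V W : Matrix (Fin d) (Fin d) ℂ) :
    r • (V * Matrix.diagonal (fun i => ((f i : ℝ) : ℂ)) * W)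
      = V * Matrix.diagonal (fun i => ((r * f i : ℝ) : ℂ)) * W := by
  have hd : Matrix.diagonal (fun i => ((r * f i : ℝ) : ℂ))
      = r • Matrix.diagonal (fun i => ((f i : ℝ) : ℂ)) := by
    ext i j
    by_cases h : i = j <;> simp [h, Matrix.diagonal_apply, Complex.real_smul]
  rw [hd, mul_smul_comm, smul_mul_assoc]

lemma conj_add {d : ℕ} (f g : Fin d → ℝ) (V W : Matrix (Fin d) (Fin d) ℂ) :
    (V * Matrix.diagonal (fun i => ((f i : ℝ) : ℂ)) * W)
      + (V * Matrix.diagonal (fun i => ((g i : ℝ) : ℂ)) * W)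
      = V * Matrix.diagonal (fun i => ((f i + g i : ℝ) : ℂ)) * W := by
  rw [← Matrix.add_mul, ← Matrix.mul_add, Matrix.diagonal_add]
  congr 2; ext i; push_cast; ring

lemma conj_sub {d : ℕ} (f g : Fin d → ℝ) (V W : Matrix (Fin d) (Fin d) ℂ) :
    (V * Matrix.diagonal (fun i => ((f i : ℝ) : ℂ)) * W)
      - (V * Matrix.diagonal (fun i => ((g i : ℝ) : ℂ)) * W)
      = V * Matrix.diagonal (fun i => ((f i - g i : ℝ) : ℂ)) * W := by
  rw [← Matrix.sub_mul, ← Matrix.mul_sub, Matrix.diagonal_sub]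
  congr 2; ext i; push_cast; ring

lemma conj_psd {d : ℕ} (f : Fin d → ℝ) (h : ∀ i, 0 ≤ f i) (V : Matrix (Fin d) (Fin d) ℂ) :
    (V * Matrix.diagonal (fun i => ((f i : ℝ) : ℂ)) * star V).PosSemidef := by
  have : (Matrix.diagonal (fun i => ((f i : ℝ) : ℂ))).PosSemidef :=
    Matrix.PosSemidef.diagonal (fun i => by
      rw [Pi.zero_apply]; exact Complex.zero_le_real.mpr (h i))
  simpa [Matrix.star_eq_conjTranspose] using this.mul_mul_conjTranspose_same V


end Aux
/-- for `Δ = ε(ρ₊ - ρ₋)` with `ρ₊ ⊥ ρ₋`, the vector `λ^↓(Δ) + λ^↑(ρ₋)` equals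
the eigenvalue vector of `ε ρ₊ + (1-ε) ρ₋` up to reordering, and
`H(λ^↓(Δ) + λ^↑(ρ₋)) = S(ρ₋ + Δ)`. -/
theorem eig_vector_eq_and_entropy {d : ℕ} (ρp ρm : Matrix (Fin d) (Fin d) ℂ)
    (hp : IsDensity ρp) (hm : IsDensity ρm) (horth : ρp * ρm = 0)
    (ε : ℝ) (hε : ε ∈ Set.Ioo (0 : ℝ) 1)
    (Δ : Matrix (Fin d) (Fin d) ℂ) (hΔdef : Δ = ε • (ρp - ρm))
    (hΔ : Δ.IsHermitian) (hmix : (ε • ρp + (1 - ε) • ρm).IsHermitian) :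
    (∃ e : Equiv.Perm (Fin d),
      ∀ i, eigDown Δ hΔ i + eigUp ρm hm.1.isHermitian i = hmix.eigenvalues (e i)) ∧
    shannonH (fun i => eigDown Δ hΔ i + eigUp ρm hm.1.isHermitian i) = vnEntropy (ρm + Δ) := by
  obtain ⟨hε0, hε1⟩ := hε
  have hεne : ε ≠ 0 := ne_of_gt hε0
  have hmp : ρm * ρp = 0 := by
    have h := congrArg Matrix.conjTranspose horth
    rwa [Matrix.conjTranspose_mul, hp.1.isHermitian.eq, hm.1.isHermitian.eq,
      Matrix.conjTranspose_zero] at h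
  set V : Matrix (Fin d) (Fin d) ℂ := (hΔ.eigenvectorUnitary : Matrix (Fin d) (Fin d) ℂ)
    with hVdef
  have hV : star V * V = 1 := (Unitary.mem_iff.mp hΔ.eigenvectorUnitary.2).1
  have hV' : V * star V = 1 := (Unitary.mem_iff.mp hΔ.eigenvectorUnitary.2).2
  set lam : Fin d → ℝ := hΔ.eigenvalues with hlam
  have hspec : Δ = V * Matrix.diagonal (fun i => ((lam i : ℝ) : ℂ)) * star V :=
    hΔ.spectral_theorem
  -- the function giving eigenvalues of ρm in terms of those of Δ
  set f : ℝ → ℝ := fun t => 2⁻¹ * (ε⁻¹ * |t| - ε⁻¹ * t) with hf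
  set g : ℝ → ℝ := fun t => f t + t with hg
  -- ρp + ρm is the "absolute value" of ε⁻¹ • Δ
  have habs : ρp + ρm = V * Matrix.diagonal (fun i => ((ε⁻¹ * |lam i| : ℝ) : ℂ)) * star V := by
    open scoped MatrixOrder in
    apply (CFC.sq_eq_sq_iff (ρp + ρm) _ (hp.1.add hm.1).nonneg
      (conj_psd _ (fun i => by positivity) V).nonneg).mp
    have hsq1 : (ρp + ρm) ^ 2 = ρp * ρp + ρm * ρm := by
      rw [pow_two, Matrix.add_mul, Matrix.mul_add, Matrix.mul_add, horth, hmp]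
      abel
    have hsq2 : Δ ^ 2 = (ε * ε) • (ρp * ρp + ρm * ρm) := by
      rw [hΔdef, pow_two, smul_mul_smul_comm, Matrix.sub_mul, Matrix.mul_sub, Matrix.mul_sub,
        horth, hmp]
      congr 1
      abel
    have hsq3 : (V * Matrix.diagonal (fun i => ((ε⁻¹ * |lam i| : ℝ) : ℂ)) * star V) ^ 2
        = (ε⁻¹ * ε⁻¹) • Δ ^ 2 := by
      rw [hspec]
      rw [pow_two, conj_mul_conj V hV, Matrix.diagonal_mul_diagonal,
        pow_two, conj_mul_conj V hV, Matrix.diagonal_mul_diagonal]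
      simp only [← Complex.ofReal_mul]
      rw [conj_smul]
      have habs2 : (fun i => (((ε⁻¹ * |lam i|) * (ε⁻¹ * |lam i|) : ℝ) : ℂ))
          = fun i => (((ε⁻¹ * ε⁻¹) * (lam i * lam i) : ℝ) : ℂ) := by
        funext i
        congr 1
        linear_combination (ε⁻¹ * ε⁻¹) * abs_mul_abs_self (lam i)
      rw [habs2]
    rw [hsq1, hsq3, hsq2, smul_smul]
    rw [show ε⁻¹ * ε⁻¹ * (ε * ε) = 1 by field_simp, one_smul]
  -- diagonalization of ρm
  have hρm : ρm = V * Matrix.diagonal (fun i => ((f (lam i) : ℝ) : ℂ)) * star V := by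
    have h1 : ρm = (2⁻¹ : ℝ) • ((ρp + ρm) - ε⁻¹ • Δ) := by
      rw [hΔdef, smul_smul, inv_mul_cancel₀ hεne, one_smul]
      module
    rw [h1, habs, hspec, conj_smul, conj_sub, conj_smul]
  -- diagonalization of the mixture
  have hmixmat : ε • ρp + (1 - ε) • ρm = ρm + Δ := by
    rw [hΔdef]; module
  have hmixdiag : ε • ρp + (1 - ε) • ρm
      = V * Matrix.diagonal (fun i => ((g (lam i) : ℝ) : ℂ)) * star V := by
    rw [hmixmat, hρm, hspec, conj_add]
  -- eigenvalue multisets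
  have hm_ms : Finset.univ.val.map (fun i => f (lam i))
      = Finset.univ.val.map hm.1.isHermitian.eigenvalues :=
    eig_multiset ρm hm.1.isHermitian V hV hV' _ hρm
  have hmix_ms : Finset.univ.val.map (fun i => g (lam i))
      = Finset.univ.val.map hmix.eigenvalues :=
    eig_multiset _ hmix V hV hV' _ hmixdiag
  -- monotonicity facts
  have hf_anti : Antitone f := by
    intro s t hst
    have h0 : |t| - t ≤ |s| - s := by
      have h1 := abs_sub_abs_le_abs_sub t s
      rw [abs_of_nonneg (sub_nonneg.mpr hst)] at h1
      linarith
    have hε' : (0 : ℝ) ≤ ε⁻¹ := le_of_lt (inv_pos.mpr hε0)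
    have h2 := mul_le_mul_of_nonneg_left h0 hε'
    simp only [hf]
    nlinarith
  have hD_anti : Antitone (eigDown Δ hΔ) := by
    intro i j hij
    exact Tuple.monotone_sort lam (Fin.rev_le_rev.mpr hij)
  -- eigDown Δ as a permutation of lam
  set e₀ : Equiv.Perm (Fin d) := Fin.revPerm.trans (Tuple.sort lam) with he₀
  have hDperm : eigDown Δ hΔ = lam ∘ e₀ := rfl
  -- the sorted eigenvalues of ρm
  have h_up : eigUp ρm hm.1.isHermitian = fun i => f (eigDown Δ hΔ i) := by
    apply mono_unique (Tuple.monotone_sort _) (hf_anti.comp hD_anti)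
    calc Finset.univ.val.map (eigUp ρm hm.1.isHermitian)
        = Finset.univ.val.map hm.1.isHermitian.eigenvalues :=
          map_comp_perm _ (Tuple.sort hm.1.isHermitian.eigenvalues)
      _ = Finset.univ.val.map (fun i => f (lam i)) := hm_ms.symm
      _ = Finset.univ.val.map ((fun i => f (lam i)) ∘ e₀) := (map_comp_perm _ e₀).symm
      _ = Finset.univ.val.map (fun i => f (eigDown Δ hΔ i)) := by
          congr 1
  have hveq : (fun i => eigDown Δ hΔ i + eigUp ρm hm.1.isHermitian i)
      = (fun i => g (lam i)) ∘ e₀ := by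
    funext i
    rw [h_up]
    simp only [hg, Function.comp_apply, hDperm]
    ring
  have hv_ms : Finset.univ.val.map (fun i => eigDown Δ hΔ i + eigUp ρm hm.1.isHermitian i)
      = Finset.univ.val.map hmix.eigenvalues := by
    rw [hveq, map_comp_perm, hmix_ms]
  obtain ⟨e, he⟩ := exists_perm_of_map_eq hv_ms
  refine ⟨⟨e, he⟩, ?_⟩
  have hrw : ρm + Δ = ε • ρp + (1 - ε) • ρm := hmixmat.symm
  rw [hrw]
  simp only [vnEntropy, shannonH]
  rw [dif_pos hmix]
  calc ∑ i, eta (eigDown Δ hΔ i + eigUp ρm hm.1.isHermitian i)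
      = ∑ i, eta (hmix.eigenvalues (e i)) := Finset.sum_congr rfl (fun i _ => by rw [he i])
    _ = ∑ i, eta (hmix.eigenvalues i) := Equiv.sum_comp e (fun j => eta (hmix.eigenvalues j))
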